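/- Let e ≥ 1 and m ≥ 2 be integers with m ≥ (e+3)/2, and suppose the nef cone and movable cone of S^[m] coincide in the sense of the following arithmetic statement: the vector (m+e, 2e) is proportional to one of the movable-cone generators. Then m = e + 2. Concretely: with g := gcd(m+e, 2e), if either (i) 2e(m+e)² = 4e²(2m-2), or (ii) there is a positive solution (a₁,b₁) of (m-1)a² - e·b² = 1 with m+e = g(m-1)a₁ and 2e = g·e·b₁, or (iii) there is a positive solution (a₁',b₁') of a² - e(m-1)b² = 1 with a₁' ≡ ±1 (mod m-1), m+e = g·a₁' and 2e = g·e·b₁', then necessarily case (ii) holds with a₁ = b₁ = 1, g = 2, and m = e + 2. -/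

import Mathlib

/-- Arithmetic criterion for the nef and movable cones of `S^[m]` to coincide when
`m ≥ (e+3)/2`: with `g := gcd(m+e, 2e)`, if the generator `((m+e)L_m - 2e·δ)/g` of the
second extremal ray of the nef cone spans an extremal ray of the movable cone (one of
the three cases (i), (ii), (iii)), then necessarily case (ii) holds with
`a₁ = b₁ = 1`, `g = 2`, and `m = e + 2`. -/
theorem stmt_15 (e m : ℤ) (he : 1 ≤ e) (hm : 2 ≤ m) (hme : e + 3 ≤ 2 * m)
    (g : ℤ) (hg : g = Int.gcd (m + e) (2 * e))
    (h :
      (2 * e * (m + e) ^ 2 = 4 * e ^ 2 * (2 * m - 2)) ∨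
      (∃ a₁ b₁ : ℤ, 0 < a₁ ∧ 0 < b₁ ∧ (m - 1) * a₁ ^ 2 - e * b₁ ^ 2 = 1 ∧
        m + e = g * (m - 1) * a₁ ∧ 2 * e = g * e * b₁) ∨
      (∃ a b : ℤ, 0 < a ∧ 0 < b ∧ a ^ 2 - e * (m - 1) * b ^ 2 = 1 ∧
        (a ≡ 1 [ZMOD (m - 1)] ∨ a ≡ -1 [ZMOD (m - 1)]) ∧
        m + e = g * a ∧ 2 * e = g * e * b)) :
    g = 2 ∧ m = e + 2 ∧
      (m - 1) * 1 ^ 2 - e * 1 ^ 2 = 1 ∧ m + e = g * (m - 1) * 1 ∧ 2 * e = g * e * 1 := by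
  have he0 : e ≠ 0 := by omega
  have hg0 : 0 ≤ g := by rw [hg]; exact Int.natCast_nonneg _
  rcases h with h | ⟨a₁, b₁, ha, hb, hp, h1, h2⟩ | ⟨a, b, ha, hb, hp, _, h1, h2⟩
  · exfalso
    nlinarith [sq_nonneg (m - e)]
  · -- case (ii)
    have h2' : e * (g * b₁) = e * 2 := by linear_combination -h2
    have hgb : g * b₁ = 2 := mul_left_cancel₀ he0 h2'
    have hg1 : 1 ≤ g := by nlinarith
    have hg2 : g ≤ 2 := by nlinarith [mul_le_mul_of_nonneg_left (by linarith : (1:ℤ) ≤ b₁) hg0]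
    interval_cases g
    · -- g = 1, b₁ = 2 : contradiction
      exfalso
      have hb1 : b₁ = 2 := by omega
      subst hb1
      have ha2 : 2 ≤ a₁ := by
        rcases eq_or_lt_of_le (show (1:ℤ) ≤ a₁ by omega) with h' | h'
        · exfalso; rw [← h'] at h1; linarith
        · omega
      have hem : m - 2 ≤ e := by
        have : 2 * (m - 1) ≤ (m - 1) * a₁ := by nlinarith
        linarith
      have key : (m + e) ^ 2 = (m - 1) * (1 + 4 * e) := by
        linear_combination (m + e + (1 * (m - 1)) * a₁) * h1 + (m - 1) * hp
      nlinarith [sq_nonneg (m - e)]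
    · -- g = 2, b₁ = 1
      have hb1 : b₁ = 1 := by omega
      subst hb1
      have ha1 : a₁ = 1 := by
        by_contra h'
        have ha2 : 2 ≤ a₁ := by omega
        have : 2 * (m - 1) ≤ (m - 1) * a₁ := by nlinarith
        linarith
      subst ha1
      refine ⟨rfl, by linarith [hp], by linarith [hp], by linarith [h1], by ring⟩
  · -- case (iii) : contradiction
    exfalso
    have h2' : e * (g * b) = e * 2 := by linear_combination -h2
    have hgb : g * b = 2 := mul_left_cancel₀ he0 h2'
    have hg1 : 1 ≤ g := by nlinarith
    have hg2 : g ≤ 2 := by nlinarith [mul_le_mul_of_nonneg_left (by linarith : (1:ℤ) ≤ b) hg0]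
    interval_cases g
    · have hb1 : b = 2 := by omega
      subst hb1
      have key : (m + e) ^ 2 = 1 + 4 * e * (m - 1) := by
        linear_combination (m + e + a) * h1 + hp
      nlinarith [sq_nonneg (m - e)]
    · have hb1 : b = 1 := by omega
      subst hb1
      have key : (m + e) ^ 2 = 4 + 4 * e * (m - 1) := by
        linear_combination (m + e + 2 * a) * h1 + 4 * hp
      nlinarith [sq_nonneg (m - e - 1)]
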